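/- arXiv:0707.1845 — 3 statements merged into one kernel-verified Lean document; each statement's English description precedes it below -/
import Mathlib

section
/- Let Ψ_1, ..., Ψ_N : ℝ^d → ℂ be functions with Re(Ψ_j(ξ)) ≥ 0 for all ξ. For each sign vector ε ∈ {+1,-1}^N with ε_1 = +1, define Ψ^ε_j(ξ) = Ψ_j(ξ) if ε_j = +1 and Ψ^ε_j(ξ) = conj(Ψ_j(ξ)) if ε_j = -1. Then the sum over all 2^{N-1} such sign vectors ε of Re(∏_{j=1}^N 1/(1+Ψ^ε_j(ξ))) equals 2^{N-1} ∏_{j=1}^N Re(1/(1+Ψ_j(ξ))), and in particular this quantity is strictly positive. -/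
open Complex Finset

lemma aux_re_pos (w : ℂ) (hw : 0 ≤ w.re) : 0 < ((1 + w)⁻¹).re := by
  have h1 : (1 + w).re = 1 + w.re := by simp
  have hne : (1 + w) ≠ 0 := by
    intro h
    rw [h] at h1
    simp at h1
    linarith
  rw [Complex.inv_re]
  apply div_pos
  · rw [h1]; linarith
  · exact Complex.normSq_pos.mpr hne

/-- For Lévy exponents `Ψ 1, ..., Ψ N : ℝ^d → ℂ` (nonnegative real parts), the sum over
all `2^(N-1)` sign vectors `ε` with `ε 1 = +1` of `Re (∏ j, 1/(1 + Ψ^ε j ξ))` equals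
`2^(N-1) * ∏ j, Re (1/(1 + Ψ j ξ))`, which is strictly positive.  Here `Ψ^ε j = Ψ j`
if `ε j = +1` and `Ψ^ε j = conj (Ψ j)` if `ε j = -1`. -/
theorem stmt3 (N d : ℕ) (hN : 0 < N) (Ψ : Fin N → (Fin d → ℝ) → ℂ)
    (hΨ : ∀ j ξ, 0 ≤ (Ψ j ξ).re) (ξ : Fin d → ℝ) :
    (∑ ε ∈ Finset.univ.filter (fun ε : Fin N → Bool => ε ⟨0, hN⟩ = true),
        (∏ j, (1 + (if ε j then Ψ j ξ else (starRingEnd ℂ) (Ψ j ξ)))⁻¹).re)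
      = 2 ^ (N - 1) * ∏ j, ((1 + Ψ j ξ)⁻¹).re ∧
    0 < ∑ ε ∈ Finset.univ.filter (fun ε : Fin N → Bool => ε ⟨0, hN⟩ = true),
        (∏ j, (1 + (if ε j then Ψ j ξ else (starRingEnd ℂ) (Ψ j ξ)))⁻¹).re := by
  set f : (Fin N → Bool) → ℂ :=
    fun ε => ∏ j, (1 + (if ε j then Ψ j ξ else (starRingEnd ℂ) (Ψ j ξ)))⁻¹ with hf
  have hconj : ∀ ε : Fin N → Bool, f (fun j => !ε j) = (starRingEnd ℂ) (f ε) := by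
    intro ε
    rw [hf]
    simp only
    rw [map_prod]
    refine Finset.prod_congr rfl fun j _ => ?_
    by_cases h : ε j = true <;> simp [h, map_add, map_one, map_inv₀]
  -- sum over all ε equals twice the restricted sum
  have hretot : ∑ ε : Fin N → Bool, (f ε).re
      = 2 * ∑ ε ∈ Finset.univ.filter (fun ε : Fin N → Bool => ε ⟨0, hN⟩ = true), (f ε).re := by
    rw [← Finset.sum_filter_add_sum_filter_not Finset.univ
      (fun ε : Fin N → Bool => ε ⟨0, hN⟩ = true) (fun ε => (f ε).re)]
    have : ∑ ε ∈ Finset.univ.filter (fun ε : Fin N → Bool => ¬ ε ⟨0, hN⟩ = true),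
        (f ε).re
        = ∑ ε ∈ Finset.univ.filter (fun ε : Fin N → Bool => ε ⟨0, hN⟩ = true), (f ε).re := by
      refine Finset.sum_nbij' (fun ε => fun j => !ε j) (fun ε => fun j => !ε j) ?_ ?_ ?_ ?_ ?_
      · intro ε hε
        simp only [Finset.mem_filter, Finset.mem_univ, true_and] at hε ⊢
        simp [hε]
      · intro ε hε
        simp only [Finset.mem_filter, Finset.mem_univ, true_and] at hε ⊢
        simp [hε]
      · intro ε _; funext j; simp
      · intro ε _; funext j; simp
      · intro ε _
        rw [hconj ε]
        simp
    rw [this]; ring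
  -- compute the full sum
  have hsumf : ∑ ε : Fin N → Bool, f ε = ((2 ^ N * ∏ j, ((1 + Ψ j ξ)⁻¹).re : ℝ) : ℂ) := by
    have huniv : (Finset.univ : Finset (Fin N → Bool))
        = Fintype.piFinset (fun _ => (Finset.univ : Finset Bool)) :=
      (Fintype.piFinset_univ).symm
    rw [hf]
    simp only
    rw [huniv]
    have hrw : ∑ x ∈ Fintype.piFinset (fun _ : Fin N => (Finset.univ : Finset Bool)),
        ∏ j : Fin N, (1 + (if x j then Ψ j ξ else (starRingEnd ℂ) (Ψ j ξ)))⁻¹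
        = ∏ j : Fin N, ∑ b : Bool, (1 + (if b then Ψ j ξ else (starRingEnd ℂ) (Ψ j ξ)))⁻¹ :=
      (Finset.prod_univ_sum (fun _ => (Finset.univ : Finset Bool))
        (fun j b => (1 + (if b then Ψ j ξ else (starRingEnd ℂ) (Ψ j ξ)))⁻¹)).symm
    rw [hrw]
    have : ∀ j : Fin N, (∑ b : Bool, (1 + (if b then Ψ j ξ else (starRingEnd ℂ) (Ψ j ξ)))⁻¹)
        = ((2 * ((1 + Ψ j ξ)⁻¹).re : ℝ) : ℂ) := by
      intro j
      rw [Fintype.sum_bool, if_pos rfl, if_neg (by simp)]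
      have h2 : (1 + (starRingEnd ℂ) (Ψ j ξ))⁻¹ = (starRingEnd ℂ) ((1 + Ψ j ξ)⁻¹) := by
        rw [map_inv₀, map_add, map_one]
      rw [h2, Complex.add_conj]
    rw [Finset.prod_congr rfl (fun j _ => this j)]
    push_cast
    rw [Finset.prod_mul_distrib]
    simp [mul_comm]
  have hre : ∑ ε : Fin N → Bool, (f ε).re = 2 ^ N * ∏ j, ((1 + Ψ j ξ)⁻¹).re := by
    rw [← Complex.re_sum, hsumf, Complex.ofReal_re]
  have hpow : (2 : ℝ) ^ N = 2 * 2 ^ (N - 1) := by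
    conv_lhs => rw [← Nat.sub_add_cancel hN]
    rw [pow_succ]
    ring
  have hkey : ∑ ε ∈ Finset.univ.filter (fun ε : Fin N → Bool => ε ⟨0, hN⟩ = true), (f ε).re
      = 2 ^ (N - 1) * ∏ j, ((1 + Ψ j ξ)⁻¹).re := by
    have := hretot
    rw [hre, hpow] at this
    linarith
  refine ⟨hkey, ?_⟩
  rw [hkey]
  apply mul_pos (by positivity)
  exact Finset.prod_pos fun j _ => aux_re_pos _ (hΨ j ξ)
end

section
/- Let X_t, t ∈ ℝ_+^N, be an N-parameter additive Lévy process in ℝ^d with Lévy exponent (Ψ_1, ..., Ψ_N), meaning X_t = X^1_{t_1} + ⋯ + X^N_{t_N} with X^j independent Lévy processes, E[e^{iξ·X^j_{t_j}}] = e^{-t_j Ψ_j(ξ)}. Define the 1-killing occupation measure O(A) = ∫_{ℝ_+^N} 1(X_t ∈ A) e^{-∑_{j=1}^N t_j} dt. Then O is a random probability measure and E[|Ô(ξ)|^2] = ∏_{j=1}^N Re(1/(1+Ψ_j(ξ))), where Ô(ξ) = ∫ e^{iξ·x} O(dx). -/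
open MeasureTheory Complex

open Set Real Filter

noncomputable def wfun : ℝ → ℝ := (Set.Ici (0:ℝ)).indicator (fun τ => Real.exp (-τ))

lemma wfun_nonneg (τ : ℝ) : 0 ≤ wfun τ := by
  unfold wfun; by_cases h : τ ∈ Set.Ici (0:ℝ) <;> simp [h, (Real.exp_pos _).le]

lemma wfun_le_one (τ : ℝ) : wfun τ ≤ 1 := by
  unfold wfun
  by_cases h : τ ∈ Set.Ici (0:ℝ)
  · simp only [Set.indicator_of_mem, h]
    exact Real.exp_le_one_iff.2 (by simpa using h.out)
  · simp [Set.indicator_of_notMem, h]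

lemma wfun_meas : Measurable wfun :=
  (Real.measurable_exp.comp measurable_neg).indicator measurableSet_Ici

lemma wfun_of_nonneg {τ : ℝ} (h : 0 ≤ τ) : wfun τ = Real.exp (-τ) := by
  simp [wfun, Set.indicator_of_mem, h]

lemma wfun_of_neg {τ : ℝ} (h : τ < 0) : wfun τ = 0 := by
  simp [wfun, Set.indicator_of_notMem, not_le.2 h]

lemma wfun_integrable : Integrable wfun := by
  rw [wfun, integrable_indicator_iff measurableSet_Ici, integrableOn_Ici_iff_integrableOn_Ioi]
  simpa using exp_neg_integrableOn_Ioi 0 one_pos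

lemma wfun_integral : ∫ τ, wfun τ = 1 := by
  rw [wfun, integral_indicator measurableSet_Ici, integral_Ici_eq_integral_Ioi]
  simpa using integral_exp_neg_Ioi_zero

lemma norm_cexp_neg_mul (z : ℂ) (τ : ℝ) : ‖Complex.exp (-(z * τ))‖ = Real.exp (-(z.re * τ)) := by
  rw [Complex.norm_exp]
  congr 1
  simp [Complex.mul_re]

lemma cexp_integrableOn_Ioi (z : ℂ) (hz : 0 < z.re) (a : ℝ) :
    IntegrableOn (fun τ : ℝ => Complex.exp (-(z * τ))) (Set.Ioi a) := by
  apply Integrable.mono' (exp_neg_integrableOn_Ioi a hz)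
  · exact (Complex.continuous_exp.comp ((continuous_const.mul Complex.continuous_ofReal).neg)).aestronglyMeasurable
  · filter_upwards with τ
    rw [norm_cexp_neg_mul]
    simp [neg_mul]

lemma hasDerivAt_cexp_neg_mul (z : ℂ) (x : ℝ) :
    HasDerivAt (fun τ : ℝ => Complex.exp (-(z * τ))) (-z * Complex.exp (-(z * x))) x := by
  have h1 : HasDerivAt (fun τ : ℝ => -(z * (τ:ℂ))) (-z) x := by
    have h0 := ((Complex.ofRealCLM.hasDerivAt (x := x)).const_mul z).neg
    simp only [Complex.ofRealCLM_apply, Complex.ofReal_one, mul_one] at h0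
    exact h0
  simpa [mul_comm] using h1.cexp

lemma integral_cexp_Ioi (z : ℂ) (hz : 0 < z.re) (a : ℝ) :
    ∫ τ in Set.Ioi a, Complex.exp (-(z * τ)) = Complex.exp (-(z * a)) / z := by
  have hz0 : z ≠ 0 := fun h => by simp [h] at hz
  have key := integral_Ioi_of_hasDerivAt_of_tendsto'
    (f := fun τ : ℝ => -(Complex.exp (-(z * τ)) / z))
    (f' := fun τ : ℝ => Complex.exp (-(z * τ))) (a := a) (m := 0)
    ?_ (cexp_integrableOn_Ioi z hz a) ?_
  · rw [key]; ring
  · intro x _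
    have := ((hasDerivAt_cexp_neg_mul z x).div_const z).neg
    convert this using 1
    · funext τ; rfl
    · field_simp
  · rw [tendsto_zero_iff_norm_tendsto_zero]
    have : (fun τ : ℝ => ‖-(Complex.exp (-(z * τ)) / z)‖) = fun τ : ℝ => Real.exp (-(z.re * τ)) / ‖z‖ := by
      funext τ
      rw [norm_neg, norm_div, norm_cexp_neg_mul]
    rw [this]
    have h0 : Tendsto (fun τ : ℝ => Real.exp (-(z.re * τ))) atTop (nhds 0) := by
      apply Real.tendsto_exp_atBot.comp
      apply Filter.tendsto_neg_atBot_iff.2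
      exact Tendsto.const_mul_atTop hz tendsto_id
    simpa using h0.div_const ‖z‖

lemma eq_of_forall_cexp_eq (a b : ℂ)
    (h : ∀ c : ℝ, 0 < c → Complex.exp (-(c * a)) = Complex.exp (-(c * b))) : a = b := by
  set w := a - b with hw
  have hf : ∀ c : ℝ, 0 < c → Complex.exp (c * w) = 1 := by
    intro c hc
    have h1 := h c hc
    have h2 : Complex.exp ((c:ℂ) * a) = Complex.exp ((c:ℂ) * b) := by
      have := congrArg (·⁻¹) h1
      simpa [Complex.exp_neg] using this
    rw [hw, mul_sub, Complex.exp_sub, h2, div_self (Complex.exp_ne_zero _)]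
  have hd : HasDerivAt (fun c : ℝ => Complex.exp ((c:ℂ) * w)) (Complex.exp ((1:ℂ) * w) * w) 1 := by
    have h1 : HasDerivAt (fun c : ℝ => (c:ℂ) * w) w 1 := by
      simpa using (Complex.ofRealCLM.hasDerivAt (x := (1:ℝ))).mul_const w
    exact h1.cexp
  have heq : (fun c : ℝ => Complex.exp ((c:ℂ) * w)) =ᶠ[nhds (1:ℝ)] fun _ => 1 := by
    filter_upwards [Ioi_mem_nhds one_pos] with c hc
    exact hf c hc
  have h0 : Complex.exp ((1:ℂ) * w) * w = 0 := by
    rw [← hd.deriv, heq.deriv_eq]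
    simp
  have : w = 0 := by
    rcases mul_eq_zero.1 h0 with h | h
    · exact absurd h (Complex.exp_ne_zero _)
    · exact h
  linear_combination this

lemma one_add_ne (ψ : ℂ) (hψ : 0 ≤ ψ.re) : (1 : ℂ) + ψ ≠ 0 := by
  intro h
  have := congrArg Complex.re h
  simp at this
  linarith

lemma helper_inner (ψ : ℂ) (hψ : 0 ≤ ψ.re) (a : ℝ) :
    ∫ x in Set.Ioi a, (wfun a * wfun x) • Complex.exp (-(Complex.ofReal (x - a)) * ψ)
      = wfun a • (Complex.exp (-(a:ℂ)) / (1+ψ)) := by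
  rcases lt_or_ge a 0 with ha | ha
  · simp [wfun_of_neg ha]
  · have hpos : 0 < (1 + ψ).re := by simp; linarith
    simp_rw [mul_smul]
    rw [integral_smul]
    congr 1
    calc ∫ x in Set.Ioi a, wfun x • Complex.exp (-(Complex.ofReal (x - a)) * ψ)
        = ∫ x in Set.Ioi a, Complex.exp ((a:ℂ) * ψ) * Complex.exp (-((1+ψ) * x)) := by
          apply setIntegral_congr_fun measurableSet_Ioi
          intro x hx
          have hx0 : (0:ℝ) ≤ x := le_trans ha (le_of_lt hx)
          simp only []
          rw [wfun_of_nonneg hx0]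
          show (Real.exp (-x)) • Complex.exp (-(Complex.ofReal (x - a)) * ψ) = _
          rw [Complex.real_smul, Complex.ofReal_exp, ← Complex.exp_add, ← Complex.exp_add]
          congr 1
          push_cast
          ring
      _ = Complex.exp ((a:ℂ) * ψ) * (Complex.exp (-((1+ψ) * a)) / (1+ψ)) := by
          rw [integral_const_mul, integral_cexp_Ioi (1+ψ) hpos a]
      _ = Complex.exp (-(a:ℂ)) / (1+ψ) := by
          rw [mul_div_assoc', ← Complex.exp_add]
          congr 2
          ring

lemma helper_outer (ψ : ℂ) (hψ : 0 ≤ ψ.re) :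
    ∫ a : ℝ, wfun a • (Complex.exp (-(a:ℂ)) / (1+ψ)) = (2 * (1+ψ))⁻¹ := by
  have h1 : ∀ a : ℝ, wfun a • (Complex.exp (-(a:ℂ)) / (1+ψ))
      = (Set.Ici (0:ℝ)).indicator (fun a => Complex.exp (-(2 * (a:ℂ)))) a / (1+ψ) := by
    intro a
    rcases lt_or_ge a 0 with ha | ha
    · simp [wfun_of_neg ha, Set.indicator_of_notMem, not_le.2 ha]
    · rw [wfun_of_nonneg ha, Set.indicator_of_mem (Set.mem_Ici.2 ha), Complex.real_smul,
        Complex.ofReal_exp, mul_div_assoc', ← Complex.exp_add]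
      congr 2
      push_cast
      ring
  simp_rw [h1]
  rw [integral_div, integral_indicator measurableSet_Ici, integral_Ici_eq_integral_Ioi,
    integral_cexp_Ioi 2 (by norm_num) 0]
  have h2 : (1:ℂ) + ψ ≠ 0 := one_add_ne ψ hψ
  field_simp
  simp

lemma norm_wsmul_le (r1 r2 : ℝ) (h1 : 0 ≤ r1) (h2 : 0 ≤ r2) (z : ℂ) (hz : z.re ≤ 0) :
    ‖(r1 * r2) • Complex.exp z‖ ≤ r1 * r2 := by
  rw [norm_smul, Real.norm_eq_abs, _root_.abs_of_nonneg (mul_nonneg h1 h2),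
    Complex.norm_exp]
  have : Real.exp z.re ≤ 1 := Real.exp_le_one_iff.2 hz
  nlinarith [mul_nonneg h1 h2]

lemma exp_arg_re_nonpos (r : ℝ) (hr : 0 ≤ r) (ψ : ℂ) (hψ : 0 ≤ ψ.re) :
    (-(Complex.ofReal r) * ψ).re ≤ 0 := by
  simp [Complex.mul_re]
  positivity

lemma key_double (ψ ψ' : ℂ) (hψ : 0 ≤ ψ.re) (hψ' : 0 ≤ ψ'.re) :
    ∫ σ : ℝ, ∫ τ : ℝ, (wfun σ * wfun τ) •
        Complex.exp (-(Complex.ofReal |τ - σ|) * (if σ < τ then ψ else ψ'))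
      = (2 * (1+ψ))⁻¹ + (2 * (1+ψ'))⁻¹ := by
  set q : ℝ × ℝ → ℂ := fun z => (wfun z.1 * wfun z.2) •
      Complex.exp (-(Complex.ofReal |z.2 - z.1|) * (if z.1 < z.2 then ψ else ψ')) with hq
  set q1 : ℝ × ℝ → ℂ := fun z => (wfun z.1 * wfun z.2) •
      Complex.exp (-(Complex.ofReal (z.2 - z.1)) * ψ) with hq1
  set q2 : ℝ × ℝ → ℂ := fun z => (wfun z.1 * wfun z.2) •
      Complex.exp (-(Complex.ofReal (z.1 - z.2)) * ψ') with hq2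
  set D : Set (ℝ × ℝ) := {z : ℝ × ℝ | z.1 < z.2} with hDdef
  have hD : MeasurableSet D := measurableSet_lt measurable_fst measurable_snd
  have hWW : Integrable (fun z : ℝ × ℝ => wfun z.1 * wfun z.2)
      ((volume : Measure ℝ).prod volume) := Integrable.mul_prod wfun_integrable wfun_integrable
  have hq1m : Measurable q1 := by
    apply Measurable.fun_smul
    · exact (wfun_meas.comp measurable_fst).mul (wfun_meas.comp measurable_snd)
    · exact Complex.measurable_exp.comp
        (((Complex.measurable_ofReal.comp (measurable_snd.sub measurable_fst)).neg).mul
          measurable_const)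
  have hq2m : Measurable q2 := by
    apply Measurable.fun_smul
    · exact (wfun_meas.comp measurable_fst).mul (wfun_meas.comp measurable_snd)
    · exact Complex.measurable_exp.comp
        (((Complex.measurable_ofReal.comp (measurable_fst.sub measurable_snd)).neg).mul
          measurable_const)
  have hbound : ∀ (g : ℝ × ℝ → ℂ), Measurable g →
      (∀ z : ℝ × ℝ, ‖g z‖ ≤ wfun z.1 * wfun z.2) → Integrable g (volume.prod volume) :=
    fun g hg hb => Integrable.mono' hWW hg.aestronglyMeasurable (ae_of_all _ hb)
  have hQ1i : Integrable (D.indicator q1) (volume.prod volume) := by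
    apply hbound _ (hq1m.indicator hD)
    intro z
    by_cases hz : z ∈ D
    · rw [Set.indicator_of_mem hz]
      exact norm_wsmul_le _ _ (wfun_nonneg _) (wfun_nonneg _) _
        (exp_arg_re_nonpos _ (by simp only [hDdef, Set.mem_setOf_eq] at hz; linarith) ψ hψ)
    · rw [Set.indicator_of_notMem hz]
      simpa using mul_nonneg (wfun_nonneg z.1) (wfun_nonneg z.2)
  have hQ2i : Integrable (Dᶜ.indicator q2) (volume.prod volume) := by
    apply hbound _ (hq2m.indicator hD.compl)
    intro z
    by_cases hz : z ∈ Dᶜ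
    · rw [Set.indicator_of_mem hz]
      have : z.2 ≤ z.1 := by
        simp only [hDdef, Set.mem_compl_iff, Set.mem_setOf_eq, not_lt] at hz; exact hz
      exact norm_wsmul_le _ _ (wfun_nonneg _) (wfun_nonneg _) _
        (exp_arg_re_nonpos _ (by linarith) ψ' hψ')
    · rw [Set.indicator_of_notMem hz]
      simpa using mul_nonneg (wfun_nonneg z.1) (wfun_nonneg z.2)
  have hsplit : q = fun z => D.indicator q1 z + Dᶜ.indicator q2 z := by
    funext z
    by_cases hz : z.1 < z.2
    · have hzD : z ∈ D := hz
      rw [Set.indicator_of_mem hzD, Set.indicator_of_notMem (by simpa using hzD)]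
      rw [hq, hq1]
      simp only [if_pos hz, add_zero]
      rw [_root_.abs_of_nonneg (by linarith : (0:ℝ) ≤ z.2 - z.1)]
    · have hzD : z ∉ D := hz
      rw [Set.indicator_of_notMem hzD, Set.indicator_of_mem (by simpa using hzD)]
      rw [hq, hq2]
      simp only [if_neg hz, zero_add]
      rw [_root_.abs_of_nonpos (by simp only [not_lt] at hz; linarith : z.2 - z.1 ≤ 0)]
      norm_num
  have hqi : Integrable q (volume.prod volume) := by
    rw [hsplit]; exact hQ1i.add hQ2i
  have lhs_eq : (∫ σ : ℝ, ∫ τ : ℝ, (wfun σ * wfun τ) •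
        Complex.exp (-(Complex.ofReal |τ - σ|) * (if σ < τ then ψ else ψ')))
      = ∫ z : ℝ × ℝ, q z ∂(volume.prod volume) := (integral_prod q hqi).symm
  rw [lhs_eq, hsplit, integral_add hQ1i hQ2i]
  have term1 : (∫ z : ℝ × ℝ, D.indicator q1 z ∂(volume.prod volume)) = (2 * (1+ψ))⁻¹ := by
    rw [integral_prod _ hQ1i]
    have inner_eq : ∀ σ : ℝ, (∫ τ : ℝ, D.indicator q1 (σ, τ))
        = wfun σ • (Complex.exp (-(σ:ℂ)) / (1+ψ)) := by
      intro σ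
      have : (fun τ : ℝ => D.indicator q1 (σ, τ))
          = (Set.Ioi σ).indicator (fun τ => q1 (σ, τ)) := by
        funext τ
        by_cases hτ : σ < τ
        · rw [Set.indicator_of_mem (show (σ,τ) ∈ D from hτ),
            Set.indicator_of_mem (Set.mem_Ioi.2 hτ)]
        · rw [Set.indicator_of_notMem (show (σ,τ) ∉ D from hτ),
            Set.indicator_of_notMem (by simpa using hτ)]
      rw [this, integral_indicator measurableSet_Ioi]
      exact helper_inner ψ hψ σ
    simp_rw [inner_eq]
    exact helper_outer ψ hψ
  have term2 : (∫ z : ℝ × ℝ, Dᶜ.indicator q2 z ∂(volume.prod volume)) = (2 * (1+ψ'))⁻¹ := by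
    rw [integral_prod_symm _ hQ2i]
    have inner_eq : ∀ τ : ℝ, (∫ σ : ℝ, Dᶜ.indicator q2 (σ, τ))
        = wfun τ • (Complex.exp (-(τ:ℂ)) / (1+ψ')) := by
      intro τ
      have h1 : (fun σ : ℝ => Dᶜ.indicator q2 (σ, τ))
          = (Set.Ici τ).indicator (fun σ => q2 (σ, τ)) := by
        funext σ
        by_cases hτ : τ ≤ σ
        · rw [Set.indicator_of_mem (show (σ,τ) ∈ Dᶜ from not_lt.2 hτ),
            Set.indicator_of_mem (Set.mem_Ici.2 hτ)]
        · rw [Set.indicator_of_notMem (show (σ,τ) ∉ Dᶜ from not_not_intro (not_le.mp hτ)),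
            Set.indicator_of_notMem (by simpa using hτ)]
      rw [h1, integral_indicator measurableSet_Ici, integral_Ici_eq_integral_Ioi]
      have h2 : ∀ σ : ℝ, q2 (σ, τ) = (wfun τ * wfun σ) •
          Complex.exp (-(Complex.ofReal (σ - τ)) * ψ') := by
        intro σ; rw [hq2]; simp only [mul_comm]
      simp_rw [h2]
      exact helper_inner ψ' hψ' τ
    simp_rw [inner_eq]
    exact helper_outer ψ' hψ'
  rw [term1, term2]

lemma key_value (ψ : ℂ) (hψ : 0 ≤ ψ.re) :
    (2 * (1+ψ))⁻¹ + (2 * (1 + (starRingEnd ℂ) ψ))⁻¹ = (((1+ψ)⁻¹).re : ℂ) := by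
  have h1 : (2:ℂ) * (1 + (starRingEnd ℂ) ψ) = (starRingEnd ℂ) (2 * (1+ψ)) := by
    rw [map_mul, map_add, map_one, map_ofNat]
  rw [h1, ← map_inv₀, Complex.add_conj]
  have h2 : ((2:ℂ) * (1+ψ))⁻¹ = (1+ψ)⁻¹ * ((2⁻¹:ℝ):ℂ) := by
    push_cast
    rw [mul_inv]
    ring
  rw [h2, mul_comm ((1+ψ)⁻¹), Complex.re_ofReal_mul]
  push_cast
  ring

lemma conj_exp_mul (a b : ℝ) : (starRingEnd ℂ) (Complex.exp (Complex.I * (a:ℂ)))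
    * Complex.exp (Complex.I * (b:ℂ)) = Complex.exp (Complex.I * ((b - a : ℝ) : ℂ)) := by
  rw [← Complex.exp_conj, ← Complex.exp_add]
  congr 1
  rw [map_mul, Complex.conj_I, Complex.conj_ofReal]
  push_cast
  ring



/-- Let `X t = X¹_{t 1} + ⋯ + X^N_{t N}` be an additive Lévy process in `ℝ^d` with Lévy
exponent `(Ψ 1, ..., Ψ N)`, encoded through its increment characteristic function:
`E e^{i ξ·(X t - X s)} = ∏ j e^{-|t j - s j| Ψ j (sgn (t j - s j) ξ)}` for `s, t ∈ ℝ₊^N`.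
Let `O ω` be the 1-killing occupation measure, i.e. the image under `t ↦ X t ω` of the
measure `e^{-∑ j, t j} dt` on `ℝ₊^N`.  Then each `O ω` is a probability measure and
`E |Ô ξ|² = ∏ j, Re (1/(1 + Ψ j ξ))` where `Ô ξ = ∫ e^{i ξ·x} O(dx)`. -/
theorem stmt7 (d N : ℕ) {Ω : Type*} [MeasurableSpace Ω] (P : Measure Ω)
    [IsProbabilityMeasure P]
    (X : (Fin N → ℝ) → Ω → (Fin d → ℝ)) (Ψ : Fin N → (Fin d → ℝ) → ℂ)
    (hX : Measurable (Function.uncurry X))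
    (hre : ∀ j ξ, 0 ≤ (Ψ j ξ).re)
    (hchar : ∀ (ξ : Fin d → ℝ) (s t : Fin N → ℝ), (∀ j, 0 ≤ s j) → (∀ j, 0 ≤ t j) →
      ∫ ω, Complex.exp (Complex.I * Complex.ofReal (∑ i, ξ i * (X t ω i - X s ω i))) ∂P
        = ∏ j, Complex.exp (-(Complex.ofReal |t j - s j|) *
            Ψ j (if s j < t j then ξ else -ξ))) :
    (∀ ω, IsProbabilityMeasure (Measure.map (fun t => X t ω)
        (((volume : Measure (Fin N → ℝ)).restrict {t | ∀ j, 0 ≤ t j}).withDensity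
          (fun t => ENNReal.ofReal (Real.exp (-∑ j, t j)))))) ∧
    ∀ ξ : Fin d → ℝ,
      ∫ ω, ‖∫ x, Complex.exp (Complex.I * Complex.ofReal (∑ i, ξ i * x i))
            ∂(Measure.map (fun t => X t ω)
              (((volume : Measure (Fin N → ℝ)).restrict {t | ∀ j, 0 ≤ t j}).withDensity
                (fun t => ENNReal.ofReal (Real.exp (-∑ j, t j)))))‖ ^ 2 ∂P
        = ∏ j, ((1 + Ψ j ξ)⁻¹).re := by
  set S : Set (Fin N → ℝ) := {t | ∀ j, 0 ≤ t j} with hSdef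
  have hS : MeasurableSet S := by
    have : S = ⋂ j, {t : Fin N → ℝ | 0 ≤ t j} := by
      ext t; simp [hSdef, Set.mem_iInter]
    rw [this]
    exact MeasurableSet.iInter fun j =>
      measurableSet_le measurable_const (measurable_pi_apply j)
  set μ : Measure (Fin N → ℝ) := ((volume : Measure (Fin N → ℝ)).restrict S).withDensity
      (fun t => ENNReal.ofReal (Real.exp (-∑ j, t j))) with hμdef
  set WP : (Fin N → ℝ) → ℝ := fun t => ∏ j, wfun (t j) with hWPdef
  have hXω : ∀ ω, Measurable (fun t => X t ω) := fun ω =>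
    hX.comp measurable_prodMk_right
  have hWPind : S.indicator (fun t => Real.exp (-∑ j, t j)) = WP := by
    funext t
    by_cases ht : t ∈ S
    · rw [Set.indicator_of_mem ht]
      show Real.exp (-∑ j, t j) = ∏ j, wfun (t j)
      have : ∀ j ∈ Finset.univ, wfun (t j) = Real.exp (-t j) :=
        fun j _ => wfun_of_nonneg (ht j)
      rw [Finset.prod_congr rfl this, ← Real.exp_sum]
      congr 1
      rw [← Finset.sum_neg_distrib]
    · rw [Set.indicator_of_notMem ht]
      show (0:ℝ) = ∏ j, wfun (t j)
      simp only [hSdef, Set.mem_setOf_eq, not_forall] at ht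
      obtain ⟨j, hj⟩ := ht
      exact (Finset.prod_eq_zero (Finset.mem_univ j) (wfun_of_neg (not_le.1 hj))).symm
  have hWPm : Measurable WP :=
    Finset.measurable_prod Finset.univ fun j _ => wfun_meas.comp (measurable_pi_apply j)
  have hWPint : Integrable WP (volume : Measure (Fin N → ℝ)) :=
    Integrable.fintype_prod (f := fun _ : Fin N => wfun) (fun _ => wfun_integrable)
  have hWPnn : ∀ t, 0 ≤ WP t := fun t => Finset.prod_nonneg fun j _ => wfun_nonneg _
  have hWP1 : (∫ t, WP t) = 1 := by
    show (∫ t : Fin N → ℝ, ∏ j, wfun (t j)) = 1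
    rw [volume_pi, integral_fintype_prod_eq_prod (ι := Fin N) (fun _ => wfun)]
    simp [wfun_integral]
  have hintS : IntegrableOn (fun t => Real.exp (-∑ j, t j)) S volume := by
    rw [← integrable_indicator_iff hS, hWPind]
    exact hWPint
  have hμuniv : μ Set.univ = 1 := by
    rw [hμdef, withDensity_apply _ MeasurableSet.univ, Measure.restrict_univ]
    rw [← ofReal_integral_eq_lintegral_ofReal hintS
      (ae_of_all _ (fun t => (Real.exp_pos _).le))]
    have : (∫ t in S, Real.exp (-∑ j, t j)) = 1 := by
      rw [← integral_indicator hS, hWPind, hWP1]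
    rw [this, ENNReal.ofReal_one]
  refine ⟨fun ω => ⟨by
    rw [Measure.map_apply (hXω ω) MeasurableSet.univ, Set.preimage_univ, hμuniv]⟩, ?_⟩
  -- PART 2
  intro ξ
  have hconj : ∀ j, Ψ j (-ξ) = (starRingEnd ℂ) (Ψ j ξ) := by
    intro j
    apply eq_of_forall_cexp_eq
    intro c hc
    have hs0 : ∀ j' : Fin N, (0:ℝ) ≤ (fun _ : Fin N => (0:ℝ)) j' := fun _ => le_refl 0
    have hsc : ∀ j', 0 ≤ (Pi.single j c : Fin N → ℝ) j' := by
      intro j'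
      by_cases h : j' = j
      · subst h; simpa using hc.le
      · simp [Pi.single_eq_of_ne h]
    have h1 := hchar ξ (Pi.single j c) (fun _ => 0) hsc hs0
    have h2 := hchar ξ (fun _ => 0) (Pi.single j c) hs0 hsc
    have key1 : (∫ ω, Complex.exp (Complex.I * Complex.ofReal
        (∑ i, ξ i * (X (fun _ => (0:ℝ)) ω i - X (Pi.single j c) ω i))) ∂P)
        = Complex.exp (-(c:ℂ) * Ψ j (-ξ)) := by
      rw [h1, Finset.prod_eq_single j]
      · have h0c : ¬ ((Pi.single j c : Fin N → ℝ) j < (fun _ : Fin N => (0:ℝ)) j) := by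
          simp only [Pi.single_eq_same]
          exact not_lt.2 hc.le
        rw [if_neg h0c, Pi.single_eq_same]
        norm_num [abs_of_pos hc]
      · intro b _ hb
        simp [Pi.single_eq_of_ne hb]
      · simp
    have key2 : (∫ ω, Complex.exp (Complex.I * Complex.ofReal
        (∑ i, ξ i * (X (Pi.single j c) ω i - X (fun _ => (0:ℝ)) ω i))) ∂P)
        = Complex.exp (-(c:ℂ) * Ψ j ξ) := by
      rw [h2, Finset.prod_eq_single j]
      · have h0c : ((fun _ : Fin N => (0:ℝ)) j < (Pi.single j c : Fin N → ℝ) j) := by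
          simp only [Pi.single_eq_same]
          exact hc
        rw [if_pos h0c, Pi.single_eq_same]
        norm_num [abs_of_pos hc]
      · intro b _ hb
        simp [Pi.single_eq_of_ne hb]
      · simp
    have hconj_int : (∫ ω, Complex.exp (Complex.I * Complex.ofReal
        (∑ i, ξ i * (X (fun _ => (0:ℝ)) ω i - X (Pi.single j c) ω i))) ∂P)
        = (starRingEnd ℂ) (∫ ω, Complex.exp (Complex.I * Complex.ofReal
        (∑ i, ξ i * (X (Pi.single j c) ω i - X (fun _ => (0:ℝ)) ω i))) ∂P) := by
      have hpt : ∀ ω, Complex.exp (Complex.I * Complex.ofReal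
          (∑ i, ξ i * (X (fun _ => (0:ℝ)) ω i - X (Pi.single j c) ω i)))
          = (starRingEnd ℂ) (Complex.exp (Complex.I * Complex.ofReal
            (∑ i, ξ i * (X (Pi.single j c) ω i - X (fun _ => (0:ℝ)) ω i)))) := by
        intro ω
        rw [← Complex.exp_conj, map_mul, Complex.conj_I, Complex.conj_ofReal]
        have hA : (∑ i, ξ i * (X (fun _ => (0:ℝ)) ω i - X (Pi.single j c) ω i))
            = -(∑ i, ξ i * (X (Pi.single j c) ω i - X (fun _ => (0:ℝ)) ω i)) := by
          rw [← Finset.sum_neg_distrib]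
          apply Finset.sum_congr rfl
          intros
          ring
        rw [hA, Complex.ofReal_neg]
        ring_nf
      rw [← integral_conj]
      exact integral_congr_ae (ae_of_all _ hpt)
    have hfinal := key1.symm.trans (hconj_int.trans (congrArg _ key2))
    rw [← Complex.exp_conj, map_mul, map_neg, Complex.conj_ofReal] at hfinal
    rw [neg_mul, neg_mul] at hfinal
    exact hfinal
  -- measurability of the elementary integrand
  have hmeas_exp : Measurable (fun x : Fin d → ℝ =>
      Complex.exp (Complex.I * Complex.ofReal (∑ i, ξ i * x i))) := by
    apply Complex.measurable_exp.comp
    apply Measurable.const_mul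
    apply Complex.measurable_ofReal.comp
    exact Finset.measurable_sum Finset.univ fun i _ =>
      (measurable_pi_apply i : Measurable fun x : Fin d → ℝ => x i).const_mul (ξ i)
  have hμg : ∀ g : (Fin N → ℝ) → ℂ, (∫ t, g t ∂μ) = ∫ t, WP t • g t := by
    intro g
    have hmeasd : Measurable fun t : Fin N → ℝ => Real.toNNReal (Real.exp (-∑ j, t j)) :=
      measurable_real_toNNReal.comp (Real.measurable_exp.comp
        (Finset.measurable_sum Finset.univ (fun j _ => measurable_pi_apply j)).neg)
    have h0 : (∫ t, g t ∂μ)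
        = ∫ t, (Real.exp (-∑ j, t j)).toNNReal • g t ∂((volume : Measure (Fin N → ℝ)).restrict S) :=
      integral_withDensity_eq_integral_smul hmeasd g
    rw [h0, ← integral_indicator hS]
    congr 1
    funext t
    by_cases ht : t ∈ S
    · rw [Set.indicator_of_mem ht]
      have h1 : WP t = Real.exp (-∑ j, t j) := by
        rw [← hWPind, Set.indicator_of_mem ht]
      rw [NNReal.smul_def, Real.coe_toNNReal _ (Real.exp_pos _).le, h1]
    · rw [Set.indicator_of_notMem ht]
      have h1 : WP t = 0 := by
        rw [← hWPind, Set.indicator_of_notMem ht]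
      rw [h1, zero_smul]
  -- rewrite the inner integral
  have hFG : ∀ ω, (∫ x, Complex.exp (Complex.I * Complex.ofReal (∑ i, ξ i * x i))
      ∂(Measure.map (fun t => X t ω) μ))
      = ∫ t, WP t • Complex.exp (Complex.I * Complex.ofReal (∑ i, ξ i * X t ω i)) := by
    intro ω
    rw [integral_map (hXω ω).aemeasurable hmeas_exp.aestronglyMeasurable]
    exact hμg _
  simp only [hFG]
  set G : Ω → ℂ := fun ω => ∫ t, WP t •
      Complex.exp (Complex.I * Complex.ofReal (∑ i, ξ i * X t ω i)) with hGdef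
  set qf : Fin N → ℝ → ℝ → ℂ := fun j σ τ => (wfun σ * wfun τ) •
      Complex.exp (-(Complex.ofReal |τ - σ|) * (if σ < τ then Ψ j ξ else Ψ j (-ξ))) with hqfdef
  have hnormE : ∀ r : ℝ, ‖Complex.exp (Complex.I * (r:ℂ))‖ = 1 := by
    intro r; rw [Complex.norm_exp]; simp
  -- measurability for the double-variable integrand
  have hΦm : Measurable (fun p : Ω × ((Fin N → ℝ) × (Fin N → ℝ)) =>
      (WP p.2.1 * WP p.2.2) • Complex.exp (Complex.I * Complex.ofReal
        (∑ i, ξ i * (X p.2.2 p.1 i - X p.2.1 p.1 i)))) := by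
    apply Measurable.fun_smul
    · exact (hWPm.comp (measurable_fst.comp measurable_snd)).mul
        (hWPm.comp (measurable_snd.comp measurable_snd))
    · apply Complex.measurable_exp.comp
      apply Measurable.const_mul
      apply Complex.measurable_ofReal.comp
      apply Finset.measurable_sum
      intro i _
      apply Measurable.const_mul
      apply Measurable.sub
      · exact (measurable_pi_apply i).comp (hX.comp
          ((measurable_snd.comp measurable_snd).prodMk measurable_fst))
      · exact (measurable_pi_apply i).comp (hX.comp
          ((measurable_fst.comp measurable_snd).prodMk measurable_fst))
  have hΦint : Integrable (fun p : Ω × ((Fin N → ℝ) × (Fin N → ℝ)) =>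
      (WP p.2.1 * WP p.2.2) • Complex.exp (Complex.I * Complex.ofReal
        (∑ i, ξ i * (X p.2.2 p.1 i - X p.2.1 p.1 i))))
      (P.prod (((volume : Measure (Fin N → ℝ))).prod volume)) := by
    have hdom : Integrable (fun p : Ω × ((Fin N → ℝ) × (Fin N → ℝ)) =>
        (1:ℝ) * (WP p.2.1 * WP p.2.2)) (P.prod ((volume : Measure (Fin N → ℝ)).prod volume)) :=
      Integrable.mul_prod (integrable_const 1) (Integrable.mul_prod hWPint hWPint)
    apply Integrable.mono' hdom hΦm.aestronglyMeasurable
    apply ae_of_all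
    intro p
    rw [norm_smul, Real.norm_eq_abs, _root_.abs_of_nonneg (mul_nonneg (hWPnn _) (hWPnn _)),
      hnormE, one_mul, mul_one]
  have hqint : Integrable (fun z : (Fin N → ℝ) × (Fin N → ℝ) =>
      ∏ j, qf j (z.1 j) (z.2 j)) ((volume : Measure (Fin N → ℝ)).prod volume) := by
    apply Integrable.mono' (Integrable.mul_prod hWPint hWPint)
    · apply Measurable.aestronglyMeasurable
      apply Finset.measurable_prod
      intro j _
      apply Measurable.fun_smul
      · exact (wfun_meas.comp ((measurable_pi_apply j).comp measurable_fst)).mul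
          (wfun_meas.comp ((measurable_pi_apply j).comp measurable_snd))
      · apply Complex.measurable_exp.comp
        apply Measurable.mul
        · exact (Complex.measurable_ofReal.comp
            (((measurable_pi_apply j).comp measurable_snd).sub
              ((measurable_pi_apply j).comp measurable_fst)).abs).neg
        · exact Measurable.ite (measurableSet_lt
            (show Measurable fun z : (Fin N → ℝ) × (Fin N → ℝ) => z.1 j from
              (measurable_pi_apply j).comp measurable_fst)
            (show Measurable fun z : (Fin N → ℝ) × (Fin N → ℝ) => z.2 j from
              (measurable_pi_apply j).comp measurable_snd)) measurable_const measurable_const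
    apply ae_of_all
    intro z
    calc ‖∏ j, qf j (z.1 j) (z.2 j)‖ = ∏ j, ‖qf j (z.1 j) (z.2 j)‖ := norm_prod _ _
      _ ≤ ∏ j, (wfun (z.1 j) * wfun (z.2 j)) := by
          apply Finset.prod_le_prod (fun j _ => norm_nonneg _)
          intro j _
          apply norm_wsmul_le _ _ (wfun_nonneg _) (wfun_nonneg _)
          by_cases h : z.1 j < z.2 j
          · rw [if_pos h]; exact exp_arg_re_nonpos _ (abs_nonneg _) _ (hre j ξ)
          · rw [if_neg h]; exact exp_arg_re_nonpos _ (abs_nonneg _) _ (hre j (-ξ))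
      _ = WP z.1 * WP z.2 := Finset.prod_mul_distrib
  rw [← Complex.ofReal_inj]
  calc ((∫ ω, ‖G ω‖^2 ∂P : ℝ) : ℂ)
      = ∫ ω, ((‖G ω‖^2 : ℝ) : ℂ) ∂P := integral_ofReal.symm
    _ = ∫ ω, G ω * (starRingEnd ℂ) (G ω) ∂P := by
        apply integral_congr_ae
        apply ae_of_all
        intro ω
        simp [Complex.mul_conj, Complex.normSq_eq_norm_sq]
    _ = ∫ ω, (∫ z : (Fin N → ℝ) × (Fin N → ℝ), (WP z.1 * WP z.2) •
          Complex.exp (Complex.I * Complex.ofReal (∑ i, ξ i * (X z.2 ω i - X z.1 ω i)))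
          ∂((volume : Measure (Fin N → ℝ)).prod volume)) ∂P := by
        apply integral_congr_ae
        apply ae_of_all
        intro ω
        have hconjG : (starRingEnd ℂ) (G ω) = ∫ s, WP s •
            (starRingEnd ℂ) (Complex.exp (Complex.I * Complex.ofReal (∑ i, ξ i * X s ω i))) := by
          rw [hGdef, ← integral_conj]
          apply integral_congr_ae
          apply ae_of_all
          intro s
          simp [Complex.real_smul, map_mul, Complex.conj_ofReal]
        simp only []
        rw [mul_comm (G ω), hconjG, hGdef, ← integral_prod_mul]
        apply integral_congr_ae
        apply ae_of_all
        intro z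
        simp only []
        rw [smul_mul_smul_comm, conj_exp_mul]
        congr 2
        rw [← Finset.sum_sub_distrib]
        have hterm : ∀ x : Fin d, ξ x * X z.2 ω x - ξ x * X z.1 ω x
            = ξ x * (X z.2 ω x - X z.1 ω x) := fun x => by ring
        simp_rw [hterm]
    _ = ∫ z : (Fin N → ℝ) × (Fin N → ℝ), (∫ ω, (WP z.1 * WP z.2) •
          Complex.exp (Complex.I * Complex.ofReal (∑ i, ξ i * (X z.2 ω i - X z.1 ω i))) ∂P)
          ∂((volume : Measure (Fin N → ℝ)).prod volume) :=
        integral_integral_swap hΦint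
    _ = ∫ z : (Fin N → ℝ) × (Fin N → ℝ), ∏ j, qf j (z.1 j) (z.2 j)
          ∂((volume : Measure (Fin N → ℝ)).prod volume) := by
        apply integral_congr_ae
        apply ae_of_all
        intro z
        simp only []
        rw [integral_smul]
        by_cases hz : (∀ j, 0 ≤ z.1 j) ∧ (∀ j, 0 ≤ z.2 j)
        · rw [hchar ξ z.1 z.2 hz.1 hz.2]
          have h1 : WP z.1 * WP z.2 = ∏ j, (wfun (z.1 j) * wfun (z.2 j)) :=
            Finset.prod_mul_distrib.symm
          rw [h1, Complex.real_smul, Complex.ofReal_prod, ← Finset.prod_mul_distrib]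
          apply Finset.prod_congr rfl
          intro j _
          rw [hqfdef]
          simp only []
          rw [Complex.real_smul, apply_ite (Ψ j)]
        · have h0 : WP z.1 * WP z.2 = 0 := by
            rcases not_and_or.1 hz with h | h
            · obtain ⟨j, hj⟩ := not_forall.1 h
              have : WP z.1 = 0 :=
                Finset.prod_eq_zero (Finset.mem_univ j) (wfun_of_neg (not_le.1 hj))
              rw [this, zero_mul]
            · obtain ⟨j, hj⟩ := not_forall.1 h
              have : WP z.2 = 0 :=
                Finset.prod_eq_zero (Finset.mem_univ j) (wfun_of_neg (not_le.1 hj))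
              rw [this, mul_zero]
          rw [h0, zero_smul]
          symm
          rcases not_and_or.1 hz with h | h
          · obtain ⟨j, hj⟩ := not_forall.1 h
            apply Finset.prod_eq_zero (Finset.mem_univ j)
            rw [hqfdef]
            simp only []
            rw [wfun_of_neg (not_le.1 hj), zero_mul, zero_smul]
          · obtain ⟨j, hj⟩ := not_forall.1 h
            apply Finset.prod_eq_zero (Finset.mem_univ j)
            rw [hqfdef]
            simp only []
            rw [wfun_of_neg (not_le.1 hj), mul_zero, zero_smul]
    _ = ∫ s : Fin N → ℝ, ∫ t : Fin N → ℝ, ∏ j, qf j (s j) (t j) :=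
        integral_prod _ hqint
    _ = ∫ s : Fin N → ℝ, ∏ j, (∫ τ, qf j (s j) τ) := by
        apply integral_congr_ae
        apply ae_of_all
        intro s
        exact integral_fintype_prod_eq_prod (ι := Fin N) (fun j τ => qf j (s j) τ)
    _ = ∏ j, ∫ σ, ∫ τ, qf j σ τ :=
        integral_fintype_prod_eq_prod (ι := Fin N) (fun j σ => ∫ τ, qf j σ τ)
    _ = ∏ j, (((1 + Ψ j ξ)⁻¹).re : ℂ) := by
        apply Finset.prod_congr rfl
        intro j _
        rw [hqfdef]
        simp only []
        rw [key_double (Ψ j ξ) (Ψ j (-ξ)) (hre j ξ) (hre j (-ξ)), hconj j,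
          key_value (Ψ j ξ) (hre j ξ)]
    _ = ((∏ j, ((1 + Ψ j ξ)⁻¹).re : ℝ) : ℂ) := (Complex.ofReal_prod _ _).symm
end

section
/- For complex z with Re(z) ≥ 0, ∫_0^∞ ∫_0^∞ e^{-s} e^{-t} e^{-|t-s| w(t,s)} ds dt = Re(1/(1+z)), where w(t,s) = z if t > s and w(t,s) = conj(z) if t < s. -/
open MeasureTheory Complex Set Filter

lemma cexp_integrableOn {b : ℂ} (hb : 0 < b.re) (a : ℝ) :
    IntegrableOn (fun t : ℝ ↦ Complex.exp (-b * t)) (Ioi a) := by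
  apply Integrable.mono' (g := fun t : ℝ ↦ Real.exp (-b.re * t))
  · exact exp_neg_integrableOn_Ioi a hb
  · exact (Complex.continuous_exp.comp (by continuity)).aestronglyMeasurable
  · filter_upwards with t
    simp [Complex.norm_exp, neg_mul]

lemma cexp_tendsto {b : ℂ} (hb : 0 < b.re) :
    Tendsto (fun t : ℝ ↦ -Complex.exp (-b * t) / b) atTop (nhds 0) := by
  rw [tendsto_zero_iff_norm_tendsto_zero]
  have : (fun t : ℝ ↦ ‖-Complex.exp (-b * t) / b‖) =
      fun t : ℝ ↦ Real.exp (-b.re * t) / ‖b‖ := by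
    ext t; simp [Complex.norm_exp, neg_mul]
  rw [this]
  have h0 : Tendsto (fun t : ℝ ↦ Real.exp (-b.re * t)) atTop (nhds 0) :=
    Real.tendsto_exp_atBot.comp (Tendsto.const_mul_atTop_of_neg (neg_lt_zero.mpr hb) tendsto_id)
  simpa using h0.div_const ‖b‖

lemma cexp_hasDerivAt {b : ℂ} (hb : b ≠ 0) (x : ℝ) :
    HasDerivAt (fun t : ℝ ↦ -Complex.exp (-b * t) / b) (Complex.exp (-b * x)) x := by
  have h1 : HasDerivAt (fun t : ℝ ↦ -b * (t : ℂ)) (-b) x := by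
    simpa using (Complex.ofRealCLM.hasDerivAt (x := x)).const_mul (-b)
  have h2 := ((Complex.hasDerivAt_exp (-b * x)).comp x h1).div_const b
  have h3 := h2.neg
  convert h3 using 1
  · rfl
  · ext t; simp [Function.comp, neg_div]
  · rw [mul_neg, neg_div, neg_neg, mul_div_assoc, div_self hb, mul_one]

lemma integral_cexp_Ioi_s8 {b : ℂ} (hb : 0 < b.re) (a : ℝ) :
    ∫ t in Ioi a, Complex.exp (-b * t) = Complex.exp (-b * a) / b := by
  have hb0 : b ≠ 0 := fun h => by simp [h] at hb
  have := integral_Ioi_of_hasDerivAt_of_tendsto' (a := a)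
    (fun x _ => cexp_hasDerivAt hb0 x) (cexp_integrableOn hb a) (cexp_tendsto hb)
  rw [this]; ring

variable {z : ℂ}

lemma inner_int (z : ℂ) (hz : 0 ≤ z.re) {s : ℝ} (hs : 0 < s) :
    (∫ t in Ioi (0 : ℝ), Complex.exp (-(Complex.ofReal s) - Complex.ofReal t -
          (Complex.ofReal |t - s|) * (if s < t then z else (starRingEnd ℂ) z)))
      = Complex.exp (-(1 + (starRingEnd ℂ) z) * s) *
          (∫ t in (0:ℝ)..s, Complex.exp (((starRingEnd ℂ) z - 1) * t))
        + Complex.exp (-2 * s) / (1 + z) := by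
  set c := (starRingEnd ℂ) z with hc
  have h1z : (0:ℝ) < (1 + z).re := by simp; linarith
  have h1zne : (1 : ℂ) + z ≠ 0 := fun h => by
    have := congrArg Complex.re h; simp at this; linarith
  have heq1 : ∀ t ∈ Ioc (0:ℝ) s,
      Complex.exp (-(Complex.ofReal s) - Complex.ofReal t -
          (Complex.ofReal |t - s|) * (if s < t then z else c)) =
      Complex.exp (-(1 + c) * s) * Complex.exp ((c - 1) * t) := by
    intro t ht
    rw [if_neg (not_lt.mpr ht.2), ← Complex.exp_add]
    have : |t - s| = s - t := by rw [abs_of_nonpos (by linarith [ht.2])]; ring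
    rw [this]; push_cast; ring_nf
  have heq2 : ∀ t ∈ Ioi s,
      Complex.exp (-(Complex.ofReal s) - Complex.ofReal t -
          (Complex.ofReal |t - s|) * (if s < t then z else c)) =
      Complex.exp ((z - 1) * s) * Complex.exp (-(1 + z) * t) := by
    intro t ht
    rw [if_pos (show s < t from ht), ← Complex.exp_add]
    have : |t - s| = t - s := abs_of_nonneg (by linarith [ht.out])
    rw [this]; push_cast; ring_nf
  have hi1 : IntegrableOn (fun t : ℝ ↦ Complex.exp (-(Complex.ofReal s) - Complex.ofReal t -
          (Complex.ofReal |t - s|) * (if s < t then z else c))) (Ioc 0 s) := by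
    apply IntegrableOn.congr_fun _ (fun t ht => (heq1 t ht).symm) measurableSet_Ioc
    apply Integrable.const_mul
    apply (Continuous.integrableOn_Ioc ?_)
    exact Complex.continuous_exp.comp (continuous_const.mul Complex.continuous_ofReal)
  have hi2 : IntegrableOn (fun t : ℝ ↦ Complex.exp (-(Complex.ofReal s) - Complex.ofReal t -
          (Complex.ofReal |t - s|) * (if s < t then z else c))) (Ioi s) := by
    apply IntegrableOn.congr_fun _ (fun t ht => (heq2 t ht).symm) measurableSet_Ioi
    exact (cexp_integrableOn h1z s).const_mul _
  rw [← Set.Ioc_union_Ioi_eq_Ioi hs.le,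
    setIntegral_union Set.Ioc_disjoint_Ioi_same measurableSet_Ioi hi1 hi2,
    setIntegral_congr_fun measurableSet_Ioc heq1,
    setIntegral_congr_fun measurableSet_Ioi heq2,
    integral_const_mul, integral_const_mul, integral_cexp_Ioi_s8 h1z s,
    intervalIntegral.integral_of_le hs.le]
  congr 1
  rw [← mul_div_assoc, ← Complex.exp_add]
  congr 2
  ring

lemma t_cexp_int : ∫ t in Ioi (0:ℝ), (t : ℂ) * Complex.exp (-2 * t) = 1 / 4 := by
  have h := Complex.integral_cpow_mul_exp_neg_mul_Ioi (a := 2) (r := 2) (by norm_num) (by norm_num)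
  have h2 : Complex.Gamma 2 = 1 := by
    have : (2:ℂ) = 1 + 1 := by norm_num
    rw [this, Complex.Gamma_add_one _ one_ne_zero, Complex.Gamma_one, mul_one]
  rw [h2, mul_one] at h
  push_cast at h
  have h3 : ((1 / 2 : ℂ)) ^ (2:ℂ) = 1 / 4 := by
    rw [show ((2:ℂ)) = ((2:ℕ):ℂ) by norm_num, Complex.cpow_natCast]; norm_num
  rw [h3] at h
  rw [← h]
  refine setIntegral_congr_fun measurableSet_Ioi (fun t ht ↦ ?_)
  rw [show (2:ℂ) - 1 = 1 by norm_num, Complex.cpow_one]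
  push_cast
  ring_nf

lemma t_cexp_integrableOn :
    IntegrableOn (fun t : ℝ ↦ (t : ℂ) * Complex.exp (-2 * t)) (Ioi 0) := by
  apply Integrable.mono' (g := fun t : ℝ ↦ Real.exp (-1 * t))
  · exact exp_neg_integrableOn_Ioi 0 one_pos
  · exact (Complex.continuous_ofReal.mul
      (Complex.continuous_exp.comp (by continuity))).aestronglyMeasurable
  · filter_upwards [ae_restrict_mem measurableSet_Ioi] with t ht
    have ht0 : (0:ℝ) ≤ t := le_of_lt ht
    rw [norm_mul]
    have h1 : ‖(t:ℂ)‖ = t := by rw [Complex.norm_real, Real.norm_eq_abs, _root_.abs_of_nonneg ht0]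
    have h2 : ‖Complex.exp (-2 * t)‖ = Real.exp (-(2*t)) := by
      rw [Complex.norm_exp]; norm_num
    rw [h1, h2]
    have h3 : t ≤ Real.exp t := (Real.add_one_le_exp t).trans' (by linarith)
    calc t * Real.exp (-(2*t)) ≤ Real.exp t * Real.exp (-(2*t)) :=
          mul_le_mul_of_nonneg_right h3 (Real.exp_nonneg _)
      _ = Real.exp (-1 * t) := by rw [← Real.exp_add]; ring_nf

/-- For complex `z` with `Re z ≥ 0`,
`∫_0^∞ ∫_0^∞ e^{-s} e^{-t} e^{-|t-s| w(t,s)} ds dt = Re (1/(1+z))`,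
where `w(t,s) = z` if `t > s` and `w(t,s) = conj z` if `t < s`. -/
theorem stmt8 (z : ℂ) (hz : 0 ≤ z.re) :
    (∫ s in Set.Ioi (0 : ℝ), ∫ t in Set.Ioi (0 : ℝ),
        Complex.exp (-(Complex.ofReal s) - Complex.ofReal t -
          (Complex.ofReal |t - s|) * (if s < t then z else (starRingEnd ℂ) z)))
      = Complex.ofReal (((1 + z)⁻¹).re) := by
  set c := (starRingEnd ℂ) z with hc
  have hcre : c.re = z.re := Complex.conj_re z
  have h1z : (0:ℝ) < (1 + z).re := by simp; linarith
  have h1c : (0:ℝ) < (1 + c).re := by simp [hcre]; linarith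
  have h1zne : (1 : ℂ) + z ≠ 0 := fun h => by
    have := congrArg Complex.re h; simp at this; linarith
  have h1cne : (1 : ℂ) + c ≠ 0 := fun h => by
    have := congrArg Complex.re h; simp [hcre] at this; linarith
  have h2re : (0:ℝ) < (2:ℂ).re := by norm_num
  have hrhs : Complex.ofReal (((1 + z)⁻¹).re) = ((1 + z)⁻¹ + (1 + c)⁻¹) / 2 := by
    have : (1 + c)⁻¹ = (starRingEnd ℂ) ((1 + z)⁻¹) := by
      rw [map_inv₀, map_add, map_one]
    rw [this, eq_div_iff (two_ne_zero), Complex.add_conj]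
    push_cast; ring
  rw [setIntegral_congr_fun measurableSet_Ioi (fun s hs => inner_int z hz hs), hrhs]
  by_cases hz1 : z = 1
  · subst hz1
    have hc1 : c = 1 := by simp [hc]
    have : ∀ s ∈ Ioi (0:ℝ),
        Complex.exp (-(1 + c) * s) * (∫ t in (0:ℝ)..s, Complex.exp ((c - 1) * t))
          + Complex.exp (-2 * s) / (1 + 1)
        = (s : ℂ) * Complex.exp (-2 * s) + (1/2 : ℂ) * Complex.exp (-2 * s) := by
      intro s _
      rw [hc1]
      simp only [sub_self, zero_mul, Complex.exp_zero, intervalIntegral.integral_const,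
        sub_zero, Complex.real_smul, mul_one]
      rw [show -(1 + (1:ℂ)) * s = -2 * s by ring]
      ring
    rw [setIntegral_congr_fun measurableSet_Ioi this]
    rw [integral_add]
    · rw [integral_const_mul, t_cexp_int, integral_cexp_Ioi_s8 h2re, hc1]
      norm_num
    · exact t_cexp_integrableOn
    · exact (cexp_integrableOn h2re 0).const_mul _
  · have hcne1 : c - 1 ≠ 0 := by
      intro h
      apply hz1
      have : c = 1 := by linear_combination h
      have := congrArg (starRingEnd ℂ) this
      simpa [hc] using this
    have key : ∀ s ∈ Ioi (0:ℝ),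
        Complex.exp (-(1 + c) * s) * (∫ t in (0:ℝ)..s, Complex.exp ((c - 1) * t))
          + Complex.exp (-2 * s) / (1 + z)
        = (1/(c-1) + 1/(1+z)) * Complex.exp (-2 * s)
          + (-(1/(c-1))) * Complex.exp (-(1 + c) * s) := by
      intro s _
      rw [integral_exp_mul_complex hcne1]
      have e1 : Complex.exp (-(1 + c) * s) * Complex.exp ((c - 1) * s)
          = Complex.exp (-2 * s) := by
        rw [← Complex.exp_add]; congr 1; push_cast; ring
      simp only [Complex.ofReal_zero, mul_zero, Complex.exp_zero]
      rw [← mul_div_assoc, mul_sub, e1, mul_one]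
      field_simp
      ring
    rw [setIntegral_congr_fun measurableSet_Ioi key, integral_add
      ((cexp_integrableOn h2re 0).const_mul _) ((cexp_integrableOn h1c 0).const_mul _),
      integral_const_mul, integral_const_mul, integral_cexp_Ioi_s8 h2re, integral_cexp_Ioi_s8 h1c]
    simp only [Complex.ofReal_zero, mul_zero, Complex.exp_zero]
    field_simp
    ring
end
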